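/- Let X ⊂ l∞^n be a nonempty linear subspace and k := dim(X). Then X is injective if and only if there is a subset J ⊂ {1,…,n} with |J| = k such that for every i ∈ {1,…,n} ∖ J there exist real numbers c(i,j) for j ∈ J with Σ_{j∈J} |c(i,j)| ≤ 1 and X = { x ∈ ℝ^n : x_i = Σ_{j∈J} c(i,j) x_j for all i ∈ {1,…,n} ∖ J }. -/

import Mathlib

open Set Metric

/-- A metric space `X` is *injective* if for all metric spaces `A`, `B`, every isometric
embedding `i : A → B` and every `1`-Lipschitz map `f : A → X`, there is a `1`-Lipschitz
map `g : B → X` with `g ∘ i = f`. -/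
def IsInjectiveMetricSpace (X : Type) [MetricSpace X] : Prop :=
  ∀ (A B : Type) [MetricSpace A] [MetricSpace B], ∀ (i : A → B) (f : A → X),
    Isometry i → LipschitzWith 1 f →
      ∃ g : B → X, LipschitzWith 1 g ∧ ∀ a, g (i a) = f a

/-- A subset of `l∞ⁿ = (Fin n → ℝ)` (whose product metric is the sup-metric) is injective
if it is an injective metric space with the induced metric. -/
def IsInjectiveSubset {n : ℕ} (S : Set (Fin n → ℝ)) : Prop :=
  IsInjectiveMetricSpace S

open Finset

namespace InjProof

variable {n : ℕ}

noncomputable def NS (S : Finset (Fin n)) (x : Fin n → ℝ) : ℝ :=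
  ((S.sup fun m => ‖x m‖₊ : NNReal) : ℝ)

lemma NS_nonneg (S : Finset (Fin n)) (x : Fin n → ℝ) : 0 ≤ NS S x := NNReal.coe_nonneg _

lemma abs_le_NS {S : Finset (Fin n)} {m : Fin n} (hm : m ∈ S) (x : Fin n → ℝ) :
    |x m| ≤ NS S x := by
  rw [← Real.norm_eq_abs, ← coe_nnnorm]
  exact_mod_cast Finset.le_sup (f := fun m => ‖x m‖₊) hm

lemma NS_le {S : Finset (Fin n)} {x : Fin n → ℝ} {C : ℝ} (hC : 0 ≤ C)
    (h : ∀ m ∈ S, |x m| ≤ C) : NS S x ≤ C := by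
  have : S.sup (fun m => ‖x m‖₊) ≤ C.toNNReal := Finset.sup_le fun m hm => by
    rw [← NNReal.coe_le_coe, coe_nnnorm, Real.coe_toNNReal _ hC, Real.norm_eq_abs]
    exact h m hm
  calc NS S x ≤ ((C.toNNReal : NNReal) : ℝ) := by exact_mod_cast this
    _ = C := Real.coe_toNNReal _ hC

lemma NS_mono {S T : Finset (Fin n)} (h : S ⊆ T) (x : Fin n → ℝ) : NS S x ≤ NS T x :=
  NS_le (NS_nonneg _ _) fun m hm => abs_le_NS (h hm) x

lemma dist_eq_NS (x y : Fin n → ℝ) : dist x y = NS Finset.univ (x - y) := by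
  rw [dist_pi_def, NS]
  norm_cast

lemma NS_zero (S : Finset (Fin n)) : NS S (0 : Fin n → ℝ) = 0 :=
  le_antisymm (NS_le le_rfl fun m _ => by simp) (NS_nonneg _ _)

lemma NS_add_le (S : Finset (Fin n)) (x y : Fin n → ℝ) :
    NS S (x + y) ≤ NS S x + NS S y :=
  NS_le (add_nonneg (NS_nonneg _ _) (NS_nonneg _ _)) fun m hm => by
    calc |(x + y) m| = |x m + y m| := rfl
      _ ≤ |x m| + |y m| := abs_add_le _ _
      _ ≤ NS S x + NS S y := add_le_add (abs_le_NS hm x) (abs_le_NS hm y)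

lemma NS_neg (S : Finset (Fin n)) (x : Fin n → ℝ) : NS S (-x) = NS S x := by
  unfold NS
  norm_cast
  exact Finset.sup_congr rfl fun m _ => by simp

lemma NS_sub_comm (S : Finset (Fin n)) (x y : Fin n → ℝ) : NS S (x - y) = NS S (y - x) := by
  rw [← NS_neg, neg_sub]

lemma NS_smul (S : Finset (Fin n)) (c : ℝ) (x : Fin n → ℝ) :
    NS S (c • x) = |c| * NS S x := by
  unfold NS
  have h : (S.sup fun m => ‖(c • x) m‖₊) = ‖c‖₊ * S.sup fun m => ‖x m‖₊ := by
    rw [NNReal.mul_finset_sup]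
    exact Finset.sup_congr rfl fun m _ => by
      show ‖c * x m‖₊ = _
      rw [nnnorm_mul]
  rw [h]
  push_cast
  rw [Real.norm_eq_abs]

/-- A 1-Lipschitz (w.r.t. the `S`-sup-seminorm) retraction of `ℝⁿ` onto `X`. -/
def IsRetr (S : Finset (Fin n)) (X : Submodule ℝ (Fin n → ℝ))
    (r : (Fin n → ℝ) → (Fin n → ℝ)) : Prop :=
  (∀ w, r w ∈ X) ∧ (∀ x ∈ X, r x = x) ∧ ∀ w w', NS S (r w - r w') ≤ NS S (w - w')

/-- Terminal case: if every coordinate of `S` is strictly essential for `X`, then no nonzero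
functional supported on `S` can annihilate `X`. -/
lemma no_functional (S : Finset (Fin n)) (X : Submodule ℝ (Fin n → ℝ))
    (r : (Fin n → ℝ) → (Fin n → ℝ)) (hr : IsRetr S X r)
    (hess : ∀ i ∈ S, ∃ x ∈ X, NS (S.erase i) x < |x i|)
    (a : Fin n → ℝ) (ha : ∃ m ∈ S, a m ≠ 0)
    (horth : ∀ x ∈ X, ∑ m ∈ S, a m * x m = 0) : False := by
  classical
  set A : Finset (Fin n) := S.filter (fun m => a m ≠ 0) with hAdef
  have hAS : A ⊆ S := Finset.filter_subset _ _
  have hA : A.Nonempty := by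
    obtain ⟨m, hm, hne⟩ := ha
    exact ⟨m, Finset.mem_filter.2 ⟨hm, hne⟩⟩
  -- normalized essential vectors
  have hv0 : ∀ i : Fin n, ∃ vv : Fin n → ℝ,
      i ∈ A → (vv ∈ X ∧ vv i = 1 ∧ NS (S.erase i) vv < 1) := by
    intro i
    by_cases hi : i ∈ A
    · obtain ⟨u, huX, hu⟩ := hess i (hAS hi)
      have hui : u i ≠ 0 := by
        intro h0
        rw [h0, abs_zero] at hu
        exact absurd hu (not_lt.2 (NS_nonneg _ _))
      refine ⟨(u i)⁻¹ • u, fun _ => ⟨X.smul_mem _ huX, ?_, ?_⟩⟩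
      · show (u i)⁻¹ * u i = 1
        field_simp
      · rw [NS_smul, abs_inv]
        rw [inv_mul_lt_iff₀ (abs_pos.2 hui), mul_one]
        exact hu
    · exact ⟨0, fun h => absurd h hi⟩
  choose v hv using hv0
  have hvX : ∀ i ∈ A, v i ∈ X := fun i hi => (hv i hi).1
  have hvi : ∀ i ∈ A, v i i = 1 := fun i hi => (hv i hi).2.1
  have hvN : ∀ i ∈ A, NS (S.erase i) (v i) < 1 := fun i hi => (hv i hi).2.2
  obtain ⟨ε, hεdef⟩ : ∃ e : ℝ, e = A.inf' hA (fun i => 1 - NS (S.erase i) (v i)) := ⟨_, rfl⟩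
  have hε : 0 < ε := hεdef ▸ (Finset.lt_inf'_iff hA).2 fun i hi => by linarith [hvN i hi]
  have hεle : ∀ i ∈ A, ε ≤ 1 - NS (S.erase i) (v i) := fun i hi =>
    hεdef ▸ Finset.inf'_le _ hi
  have hε1 : ε ≤ 1 := by
    obtain ⟨i, hi⟩ := hA
    linarith [hεle i hi, NS_nonneg (S.erase i) (v i)]
  set s : Fin n → ℝ := fun i => if a i < 0 then -1 else 1 with hsdef
  have hs1 : ∀ i, s i = 1 ∨ s i = -1 := fun i => by
    by_cases h : a i < 0 <;> simp [hsdef, h]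
  have has : ∀ i, a i = |a i| * s i := by
    intro i
    by_cases h : a i < 0
    · simp [hsdef, h, abs_of_neg h]
    · simp [hsdef, h, abs_of_nonneg (not_lt.1 h)]
  set cf : Fin n → (Fin n → ℝ) := fun i => s i • v i with hcfdef
  have hcfX : ∀ i ∈ A, cf i ∈ X := fun i hi => X.smul_mem _ (hvX i hi)
  have hcfabs : ∀ i ∈ A, ∀ m, |cf i m| = |v i m| := by
    intro i hi m
    show |s i * v i m| = _
    rcases hs1 i with h | h <;> rw [h] <;> simp
  have hbound : ∀ i ∈ A, ∀ m ∈ S, m ≠ i → |cf i m| ≤ 1 - ε := by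
    intro i hi m hm hne
    rw [hcfabs i hi]
    calc |v i m| ≤ NS (S.erase i) (v i) := abs_le_NS (Finset.mem_erase.2 ⟨hne, hm⟩) _
      _ ≤ 1 - ε := by linarith [hεle i hi]
  have hboundi : ∀ i ∈ A, |cf i i| = 1 := fun i hi => by
    rw [hcfabs i hi, hvi i hi, abs_one]
  have hcc : ∀ i ∈ A, ∀ j ∈ A, ∀ m ∈ S, |cf i m - cf j m| ≤ 2 - ε := by
    intro i hi j hj m hm
    rcases eq_or_ne i j with rfl | hij
    · simp; linarith
    have habs : |cf i m - cf j m| ≤ |cf i m| + |cf j m| := abs_sub _ _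
    by_cases hmi : m = i
    · subst hmi
      have := hboundi m hi
      have := hbound j hj m hm hij
      linarith
    · have h1 := hbound i hi m hm hmi
      by_cases hmj : m = j
      · subst hmj
        have := hboundi m hj
        linarith
      · have h2 := hbound j hj m hm hmj
        linarith
  obtain ⟨r0, hr0def⟩ : ∃ q : ℝ, q = 1 - ε / 2 := ⟨_, rfl⟩
  have hr0 : 0 ≤ r0 := by rw [hr0def]; linarith
  set w : Fin n → ℝ := fun m => (A.sup' hA fun j => cf j m) - r0 with hwdef
  have hwc : ∀ i ∈ A, ∀ m ∈ S, |w m - cf i m| ≤ r0 := by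
    intro i hi m hm
    have hup : (A.sup' hA fun j => cf j m) ≤ cf i m + (2 - ε) :=
      Finset.sup'_le _ _ fun j hj => by
        have := hcc j hj i hi m hm
        have := abs_le.1 this
        linarith [this.2]
    have hlo : cf i m ≤ A.sup' hA fun j => cf j m := Finset.le_sup' (fun j => cf j m) hi
    rw [abs_le]
    constructor
    · show -r0 ≤ (A.sup' hA fun j => cf j m) - r0 - cf i m
      linarith
    · show (A.sup' hA fun j => cf j m) - r0 - cf i m ≤ r0
      linarith
  have hwcN : ∀ i ∈ A, NS S (w - cf i) ≤ r0 := fun i hi =>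
    NS_le hr0 fun m hm => hwc i hi m hm
  set z : Fin n → ℝ := r w with hzdef
  have hzX : z ∈ X := hr.1 w
  have hzc : ∀ i ∈ A, NS S (z - cf i) ≤ r0 := by
    intro i hi
    calc NS S (z - cf i) = NS S (r w - r (cf i)) := by rw [hr.2.1 (cf i) (hcfX i hi)]
      _ ≤ NS S (w - cf i) := hr.2.2 w (cf i)
      _ ≤ r0 := hwcN i hi
  have hsz : ∀ i ∈ A, ε / 2 ≤ s i * z i := by
    intro i hi
    have h1 : |z i - cf i i| ≤ r0 := by
      calc |z i - cf i i| = |(z - cf i) i| := rfl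
        _ ≤ NS S (z - cf i) := abs_le_NS (hAS hi) _
        _ ≤ r0 := hzc i hi
    have h2 : cf i i = s i := by
      show s i * v i i = s i
      rw [hvi i hi, mul_one]
    rw [h2] at h1
    have h3 := abs_le.1 h1
    have hr0' : r0 = 1 - ε / 2 := hr0def
    rcases hs1 i with h | h <;> rw [h] at h3 ⊢
    · have := h3.1
      nlinarith
    · have := h3.2
      nlinarith
  have hsum : ∑ m ∈ S, a m * z m = ∑ m ∈ A, a m * z m := by
    refine (Finset.sum_subset hAS fun m hm hnm => ?_).symm
    have : a m = 0 := by
      by_contra hne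
      exact hnm (Finset.mem_filter.2 ⟨hm, hne⟩)
    simp [this]
  have hterm : ∀ i ∈ A, |a i| * (ε / 2) ≤ a i * z i := by
    intro i hi
    calc |a i| * (ε / 2) ≤ |a i| * (s i * z i) :=
        mul_le_mul_of_nonneg_left (hsz i hi) (abs_nonneg _)
      _ = a i * z i := by
          conv_rhs => rw [has i]
          ring
  have hpos : 0 < ∑ i ∈ A, |a i| := by
    refine Finset.sum_pos (fun i hi => abs_pos.2 (Finset.mem_filter.1 hi).2) hA
  have h0 : (0 : ℝ) = ∑ m ∈ S, a m * z m := (horth z hzX).symm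
  rw [hsum] at h0
  have : ∑ i ∈ A, |a i| * (ε / 2) ≤ ∑ i ∈ A, a i * z i := Finset.sum_le_sum hterm
  rw [← Finset.sum_mul] at this
  nlinarith


lemma NS_triangle (S : Finset (Fin n)) (x y z : Fin n → ℝ) :
    NS S (x - z) ≤ NS S (x - y) + NS S (y - z) := by
  have := NS_add_le S (x - y) (y - z)
  rwa [sub_add_sub_cancel] at this

/-- If coordinate `i` is redundant for `X`, the retraction can be pushed to `S.erase i`. -/
lemma reduce (S : Finset (Fin n)) (i : Fin n) (X : Submodule ℝ (Fin n → ℝ))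
    (hred : ∀ x ∈ X, |x i| ≤ NS (S.erase i) x)
    (r : (Fin n → ℝ) → (Fin n → ℝ)) (hr : IsRetr S X r) :
    ∃ r', IsRetr (S.erase i) X r' := by
  classical
  set S' : Finset (Fin n) := S.erase i with hS'
  have hbdd : ∀ w : Fin n → ℝ,
      BddBelow (Set.range fun x : X => (x : Fin n → ℝ) i + NS S' (w - (x : Fin n → ℝ))) := by
    intro w
    refine ⟨-NS S' w, ?_⟩
    rintro t ⟨x, rfl⟩
    have h1 : |(x : Fin n → ℝ) i| ≤ NS S' (x : Fin n → ℝ) := hred _ x.2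
    have h2 : NS S' (x : Fin n → ℝ) ≤ NS S' (w - x) + NS S' w := by
      have h3 := NS_triangle S' (x : Fin n → ℝ) w 0
      rw [sub_zero, sub_zero, NS_sub_comm S' (x : Fin n → ℝ) w] at h3
      exact h3
    have h4 := neg_abs_le ((x : Fin n → ℝ) i)
    simp only
    linarith
  set g : (Fin n → ℝ) → ℝ :=
    fun w => sInf (Set.range fun x : X => (x : Fin n → ℝ) i + NS S' (w - (x : Fin n → ℝ)))
    with hgdef
  have hgle : ∀ w (x : X), g w ≤ (x : Fin n → ℝ) i + NS S' (w - (x : Fin n → ℝ)) :=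
    fun w x => csInf_le (hbdd w) ⟨x, rfl⟩
  have hgge : ∀ w (C : ℝ), (∀ x : X, C ≤ (x : Fin n → ℝ) i + NS S' (w - (x : Fin n → ℝ))) →
      C ≤ g w := fun w C h =>
    le_csInf ⟨_, ⟨(⟨0, X.zero_mem⟩ : X), rfl⟩⟩ (by rintro t ⟨x, rfl⟩; exact h x)
  have hgX : ∀ x ∈ X, g x = x i := by
    intro x hx
    refine le_antisymm ?_ (hgge x (x i) fun y => ?_)
    · have := hgle x ⟨x, hx⟩
      rwa [sub_self, NS_zero, add_zero] at this
    · have h1 : |x i - (y : Fin n → ℝ) i| ≤ NS S' (x - (y : Fin n → ℝ)) := by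
        have := hred (x - (y : Fin n → ℝ)) (X.sub_mem hx y.2)
        exact this
      have h2 := abs_le.1 h1
      linarith [h2.1]
  have hglip : ∀ w w', g w ≤ g w' + NS S' (w - w') := by
    intro w w'
    rw [← sub_le_iff_le_add]
    refine hgge w' _ fun x => ?_
    have h1 := hgle w x
    have h2 := NS_triangle S' w w' (x : Fin n → ℝ)
    linarith
  set ι : (Fin n → ℝ) → (Fin n → ℝ) := fun w => Function.update w i (g w) with hιdef
  have hιX : ∀ x ∈ X, ι x = x := by
    intro x hx
    show Function.update x i (g x) = x
    rw [hgX x hx]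
    exact Function.update_eq_self i x
  refine ⟨r ∘ ι, fun w => hr.1 (ι w), fun x hx => by
    show r (ι x) = x
    rw [hιX x hx]
    exact hr.2.1 x hx, ?_⟩
  intro w w'
  have h3 : NS S (ι w - ι w') ≤ NS S' (w - w') := by
    refine NS_le (NS_nonneg _ _) fun m hm => ?_
    by_cases hmi : m = i
    · subst hmi
      have he : (ι w - ι w') m = g w - g w' := by
        show Function.update w m (g w) m - Function.update w' m (g w') m = _
        rw [Function.update_self, Function.update_self]
      rw [he, abs_le]
      constructor
      · have := hglip w' w
        rw [NS_sub_comm] at this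
        linarith
      · linarith [hglip w w']
    · have he : (ι w - ι w') m = w m - w' m := by
        show Function.update w i (g w) m - Function.update w' i (g w') m = _
        rw [Function.update_of_ne hmi, Function.update_of_ne hmi]
      rw [he]
      have h5 := abs_le_NS (show m ∈ S' by rw [hS']; exact Finset.mem_erase.2 ⟨hmi, hm⟩) (w - w')
      rwa [Pi.sub_apply] at h5
  calc NS S' (r (ι w) - r (ι w')) ≤ NS S (r (ι w) - r (ι w')) :=
      NS_mono (Finset.erase_subset _ _) _
    _ ≤ NS S (ι w - ι w') := hr.2.2 _ _
    _ ≤ NS S' (w - w') := h3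


lemma main_lemma (S : Finset (Fin n)) : ∀ (X : Submodule ℝ (Fin n → ℝ)),
    (∀ x ∈ X, (∀ m ∈ S, x m = 0) → x = 0) →
    (∃ r, IsRetr S X r) →
    ∃ J, J ⊆ S ∧ J.card = Module.finrank ℝ X ∧ ∀ x ∈ X, NS S x ≤ NS J x := by
  classical
  induction S using Finset.strongInduction with
  | _ S IH =>
    intro X hnorm hret
    obtain ⟨r, hr⟩ := hret
    by_cases hcase : ∃ i ∈ S, ∀ x ∈ X, |x i| ≤ NS (S.erase i) x
    · -- a redundant coordinate exists: drop it
      obtain ⟨i, hiS, hred⟩ := hcase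
      obtain ⟨r', hr'⟩ := reduce S i X hred r hr
      have hnorm' : ∀ x ∈ X, (∀ m ∈ S.erase i, x m = 0) → x = 0 := by
        intro x hx h0
        refine hnorm x hx fun m hm => ?_
        by_cases hmi : m = i
        · subst hmi
          have h1 := hred x hx
          have h2 : NS (S.erase m) x ≤ 0 := NS_le le_rfl fun m' hm' => by
            rw [h0 m' hm']; simp
          have h3 : |x m| = 0 := le_antisymm (h1.trans h2) (abs_nonneg _)
          exact abs_eq_zero.1 h3
        · exact h0 m (Finset.mem_erase.2 ⟨hmi, hm⟩)
      obtain ⟨J, hJsub, hJcard, hJnorm⟩ :=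
        IH (S.erase i) (Finset.erase_ssubset hiS) X hnorm' ⟨r', hr'⟩
      refine ⟨J, hJsub.trans (Finset.erase_subset _ _), hJcard, fun x hx => ?_⟩
      have h1 : NS S x ≤ NS (S.erase i) x := NS_le (NS_nonneg _ _) fun m hm => by
        by_cases hmi : m = i
        · subst hmi; exact hred x hx
        · exact abs_le_NS (Finset.mem_erase.2 ⟨hmi, hm⟩) x
      exact h1.trans (hJnorm x hx)
    · -- terminal case: every coordinate of S is strictly essential
      push_neg at hcase
      have hess : ∀ i ∈ S, ∃ x ∈ X, NS (S.erase i) x < |x i| := hcase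
      set Q : X →ₗ[ℝ] (↥S → ℝ) :=
        (LinearMap.funLeft ℝ ℝ (fun j : ↥S => (j : Fin n))).comp X.subtype with hQdef
      have hQapp : ∀ (x : X) (j : ↥S), Q x j = (x : Fin n → ℝ) j := fun x j => rfl
      have hinj : Function.Injective Q := by
        intro x y hxy
        have hsub : ∀ m ∈ S, ((x : Fin n → ℝ) - (y : Fin n → ℝ)) m = 0 := by
          intro m hm
          have h := congrFun hxy ⟨m, hm⟩
          rw [hQapp, hQapp] at h
          show (x : Fin n → ℝ) m - (y : Fin n → ℝ) m = 0
          rw [h, sub_self]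
        have h0 := hnorm _ (X.sub_mem x.2 y.2) hsub
        exact Subtype.ext (sub_eq_zero.1 h0)
      set e := WithLp.linearEquiv 2 ℝ (↥S → ℝ) with hedef
      set Q' : X →ₗ[ℝ] EuclideanSpace ℝ ↥S := e.symm.toLinearMap.comp Q with hQ'def
      have hsurj : Function.Surjective Q := by
        by_contra hns
        have hKne : LinearMap.range Q' ≠ ⊤ := by
          intro htop
          apply hns
          intro y
          obtain ⟨x, hx⟩ := LinearMap.range_eq_top.1 htop (e.symm y)
          refine ⟨x, ?_⟩
          have h := congrArg e hx
          have h2 : e (Q' x) = Q x := e.apply_symm_apply (Q x)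
          rw [h2, e.apply_symm_apply] at h
          exact h
        have hbotne : (LinearMap.range Q')ᗮ ≠ ⊥ := by
          rwa [Ne, Submodule.orthogonal_eq_bot_iff]
        obtain ⟨a, haK, ha0⟩ := Submodule.exists_mem_ne_zero_of_ne_bot hbotne
        have horth0 : ∀ x : X, ∑ j : ↥S, (x : Fin n → ℝ) j * a j = 0 := by
          intro x
          have h := (Submodule.mem_orthogonal _ a).1 haK (Q' x) ⟨x, rfl⟩
          simpa [PiLp.inner_apply, RCLike.inner_apply, starRingEnd_apply, hQ'def,
            hedef, WithLp.coe_symm_linearEquiv, WithLp.ofLp_toLp, hQapp, mul_comm] using h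
        set af : Fin n → ℝ := fun m => if h : m ∈ S then a ⟨m, h⟩ else 0 with hafdef
        have haf : ∃ m ∈ S, af m ≠ 0 := by
          obtain ⟨j, hj⟩ := Function.ne_iff.1 (fun h => ha0 (WithLp.ofLp_injective 2 h))
          refine ⟨(j : Fin n), j.2, ?_⟩
          have : af (j : Fin n) = a j := by
            rw [hafdef]
            simp only [dif_pos j.2, Subtype.coe_eta]
          rw [this]
          simpa using hj
        have horth : ∀ x ∈ X, ∑ m ∈ S, af m * x m = 0 := by
          intro x hx
          have h1 : ∑ m ∈ S, af m * x m = ∑ j : ↥S, af (j : Fin n) * x (j : Fin n) :=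
            (Finset.sum_coe_sort S _).symm
          rw [h1]
          have h2 : ∀ j : ↥S, af (j : Fin n) * x (j : Fin n) = x (j : Fin n) * a j := by
            intro j
            rw [hafdef]
            simp only [dif_pos j.2]
            rw [Subtype.coe_eta, mul_comm]
          rw [Finset.sum_congr rfl fun j _ => h2 j]
          exact horth0 ⟨x, hx⟩
        exact no_functional S X r hr hess af haf horth
      have hfr : Module.finrank ℝ X = S.card := by
        have h := LinearEquiv.finrank_eq (LinearEquiv.ofBijective Q ⟨hinj, hsurj⟩)
        rw [h, Module.finrank_pi, Fintype.card_coe]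
      exact ⟨S, Finset.Subset.refl S, hfr.symm, fun x _ => le_rfl⟩


/-- If a subset of `l∞ⁿ` admits a 1-Lipschitz retraction from the whole space,
then it is injective. -/
lemma isInjectiveSubset_of_retract {S : Set (Fin n → ℝ)}
    (ρ : (Fin n → ℝ) → (Fin n → ℝ)) (hmem : ∀ w, ρ w ∈ S) (hfix : ∀ x ∈ S, ρ x = x)
    (hlip : ∀ x y, dist (ρ x) (ρ y) ≤ dist x y) : IsInjectiveSubset S := by
  intro A B _ _ i f hi hf
  classical
  set F' : B → (Fin n → ℝ) := fun b => if h : ∃ a, i a = b then (f h.choose : Fin n → ℝ) else 0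
    with hF'
  have hF'eq : ∀ a : A, F' (i a) = (f a : Fin n → ℝ) := by
    intro a
    have h : ∃ a', i a' = i a := ⟨a, rfl⟩
    have : h.choose = a := hi.injective h.choose_spec
    simp [hF', dif_pos h, this]
  have hF'lip : LipschitzOnWith 1 F' (Set.range i) := by
    apply LipschitzOnWith.of_dist_le_mul
    rintro x ⟨a, rfl⟩ y ⟨a', rfl⟩
    rw [hF'eq a, hF'eq a', hi.dist_eq]
    calc dist (f a : Fin n → ℝ) (f a') = dist (f a) (f a') := (Subtype.dist_eq _ _).symm
      _ ≤ 1 * dist a a' := hf.dist_le_mul a a'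
  obtain ⟨G, hGlip, hGeq⟩ := hF'lip.extend_pi
  refine ⟨fun b => ⟨ρ (G b), hmem _⟩, ?_, ?_⟩
  · apply LipschitzWith.of_dist_le_mul
    intro b b'
    calc dist (⟨ρ (G b), hmem _⟩ : S) ⟨ρ (G b'), hmem _⟩ = dist (ρ (G b)) (ρ (G b')) :=
        Subtype.dist_eq _ _
      _ ≤ dist (G b) (G b') := hlip _ _
      _ ≤ 1 * dist b b' := hGlip.dist_le_mul b b'
  · intro a
    have h1 : G (i a) = (f a : Fin n → ℝ) := by
      rw [← hGeq ⟨a, rfl⟩, hF'eq a]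
    apply Subtype.ext
    show ρ (G (i a)) = (f a : Fin n → ℝ)
    rw [h1]
    exact hfix _ (f a).2

/-- The backward direction: a graph with small coefficients is injective. -/
lemma backward (X : Submodule ℝ (Fin n → ℝ)) (J : Finset (Fin n)) (c : Fin n → Fin n → ℝ)
    (hc1 : ∀ i ∉ J, ∑ j ∈ J, |c i j| ≤ 1)
    (hXeq : (X : Set (Fin n → ℝ)) = {x | ∀ i ∉ J, x i = ∑ j ∈ J, c i j * x j}) :
    IsInjectiveSubset (X : Set (Fin n → ℝ)) := by
  classical
  set ρ : (Fin n → ℝ) → (Fin n → ℝ) :=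
    fun x i => if i ∈ J then x i else ∑ j ∈ J, c i j * x j with hρ
  have hρJ : ∀ x, ∀ j ∈ J, ρ x j = x j := fun x j hj => by simp [hρ, hj]
  have hmem : ∀ w, ρ w ∈ (X : Set (Fin n → ℝ)) := by
    intro w
    rw [hXeq]
    intro i hi
    simp only [hρ, if_neg hi]
    exact Finset.sum_congr rfl fun j hj => by rw [if_pos hj]
  have hfix : ∀ x ∈ (X : Set (Fin n → ℝ)), ρ x = x := by
    intro x hx
    funext i
    by_cases hi : i ∈ J
    · exact hρJ x i hi
    · simp only [hρ, if_neg hi]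
      exact ((hXeq ▸ hx) i hi).symm
  have hlip : ∀ x y, dist (ρ x) (ρ y) ≤ dist x y := by
    intro x y
    rw [dist_pi_le_iff dist_nonneg]
    intro i
    by_cases hi : i ∈ J
    · simp only [hρ, if_pos hi]
      exact dist_le_pi_dist x y i
    · simp only [hρ, if_neg hi, Real.dist_eq, ← Finset.sum_sub_distrib]
      calc |∑ j ∈ J, (c i j * x j - c i j * y j)| ≤ ∑ j ∈ J, |c i j * x j - c i j * y j| :=
          Finset.abs_sum_le_sum_abs _ _
        _ = ∑ j ∈ J, |c i j| * |x j - y j| := by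
            exact Finset.sum_congr rfl fun j _ => by rw [← abs_mul, mul_sub]
        _ ≤ ∑ j ∈ J, |c i j| * dist x y := by
            refine Finset.sum_le_sum fun j _ => ?_
            exact mul_le_mul_of_nonneg_left
              ((Real.dist_eq (x j) (y j)) ▸ dist_le_pi_dist x y j) (abs_nonneg _)
        _ = (∑ j ∈ J, |c i j|) * dist x y := (Finset.sum_mul _ _ _).symm
        _ ≤ 1 * dist x y := mul_le_mul_of_nonneg_right (hc1 i hi) dist_nonneg
        _ = dist x y := one_mul _
  exact isInjectiveSubset_of_retract ρ hmem hfix hlip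


/-- Forward direction. -/
lemma forward (X : Submodule ℝ (Fin n → ℝ)) (h : IsInjectiveSubset (X : Set (Fin n → ℝ))) :
    ∃ J : Finset (Fin n), J.card = Module.finrank ℝ X ∧
      ∃ c : Fin n → Fin n → ℝ,
        (∀ i ∉ J, ∑ j ∈ J, |c i j| ≤ 1) ∧
        (X : Set (Fin n → ℝ)) = {x | ∀ i ∉ J, x i = ∑ j ∈ J, c i j * x j} := by
  classical
  -- get a 1-Lipschitz retraction
  obtain ⟨g, hglip, hgeq⟩ := h (X : Set (Fin n → ℝ)) (Fin n → ℝ) Subtype.val id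
    isometry_subtype_coe (LipschitzWith.id)
  set r : (Fin n → ℝ) → (Fin n → ℝ) := fun w => (g w : Fin n → ℝ) with hrdef
  have hretr : IsRetr Finset.univ X r := by
    refine ⟨fun w => (g w).2, fun x hx => ?_, fun w w' => ?_⟩
    · show ((g x : Fin n → ℝ)) = x
      have := hgeq ⟨x, hx⟩
      rw [this]
      rfl
    · calc NS Finset.univ (r w - r w') = dist (r w) (r w') := (dist_eq_NS _ _).symm
        _ = dist (g w) (g w') := (Subtype.dist_eq _ _).symm
        _ ≤ 1 * dist w w' := hglip.dist_le_mul w w'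
        _ = NS Finset.univ (w - w') := by rw [one_mul, dist_eq_NS]
  have hnorm : ∀ x ∈ X, (∀ m ∈ Finset.univ, x m = 0) → x = 0 := fun x _ h0 =>
    funext fun m => h0 m (Finset.mem_univ m)
  obtain ⟨J, _, hJcard, hJnorm⟩ := main_lemma Finset.univ X hnorm ⟨r, hretr⟩
  -- the coordinate projection onto J is a linear isomorphism
  set QJ : X →ₗ[ℝ] (↥J → ℝ) :=
    (LinearMap.funLeft ℝ ℝ (fun j : ↥J => (j : Fin n))).comp X.subtype with hQJdef
  have hQJapp : ∀ (x : X) (j : ↥J), QJ x j = (x : Fin n → ℝ) j := fun x j => rfl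
  have hNSJ0 : ∀ x : Fin n → ℝ, x ∈ X → (∀ j ∈ J, x j = 0) → x = 0 := by
    intro x hx h0
    have h1 : NS J x ≤ 0 := NS_le le_rfl fun m hm => by rw [h0 m hm]; simp
    funext m
    have h2 := (abs_le_NS (Finset.mem_univ m) x).trans ((hJnorm x hx).trans h1)
    have := abs_nonneg (x m)
    have : |x m| = 0 := le_antisymm h2 this
    exact abs_eq_zero.1 this
  have hinj : Function.Injective QJ := by
    intro x y hxy
    have hsub : ∀ j ∈ J, ((x : Fin n → ℝ) - (y : Fin n → ℝ)) j = 0 := by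
      intro m hm
      have hc := congrFun hxy ⟨m, hm⟩
      rw [hQJapp, hQJapp] at hc
      show (x : Fin n → ℝ) m - (y : Fin n → ℝ) m = 0
      rw [hc, sub_self]
    exact Subtype.ext (sub_eq_zero.1 (hNSJ0 _ (X.sub_mem x.2 y.2) hsub))
  have hfr : Module.finrank ℝ X = Module.finrank ℝ (↥J → ℝ) := by
    rw [Module.finrank_pi, Fintype.card_coe, hJcard]
  have hsurj : Function.Surjective QJ :=
    (LinearMap.injective_iff_surjective_of_finrank_eq_finrank hfr).1 hinj
  set eqv : X ≃ₗ[ℝ] (↥J → ℝ) := LinearEquiv.ofBijective QJ ⟨hinj, hsurj⟩ with heqvdef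
  have heqvapp : ∀ (x : X) (j : ↥J), eqv x j = (x : Fin n → ℝ) j := fun x j => rfl
  set σ := eqv.symm with hσdef
  set c : Fin n → Fin n → ℝ := fun i j =>
    if hj : j ∈ J then (σ (Pi.single ⟨j, hj⟩ 1) : Fin n → ℝ) i else 0 with hcdef
  have hσcoord : ∀ (z : ↥J → ℝ) (j : ↥J), (σ z : Fin n → ℝ) (j : Fin n) = z j := by
    intro z j
    have h := congrFun (eqv.apply_symm_apply z) j
    rw [← h]
    rfl
  have expand' : ∀ (y : Fin n → ℝ) (i : Fin n),
      (σ (fun j : ↥J => y (j : Fin n)) : Fin n → ℝ) i = ∑ j ∈ J, c i j * y j := by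
    intro y i
    set P : ↥J → (↥J → ℝ) := fun j => Pi.single j (1 : ℝ) with hPdef
    have hz : (fun j : ↥J => y (j : Fin n)) = ∑ j : ↥J, y (j : Fin n) • P j := by
      rw [← Finset.univ_sum_single (fun j : ↥J => y (j : Fin n))]
      refine Finset.sum_congr rfl fun j _ => ?_
      rw [hPdef]
      rw [← Pi.single_smul, smul_eq_mul, mul_one]
    have hcoe : ((∑ j : ↥J, y (j : Fin n) • σ (P j) : X) : Fin n → ℝ) i
        = ∑ j : ↥J, y (j : Fin n) * (σ (P j) : Fin n → ℝ) i := by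
      rw [AddSubmonoidClass.coe_finset_sum]
      rw [Finset.sum_apply]
      refine Finset.sum_congr rfl fun j _ => ?_
      rfl
    calc (σ (fun j : ↥J => y (j : Fin n)) : Fin n → ℝ) i
        = ((∑ j : ↥J, y (j : Fin n) • σ (P j) : X) : Fin n → ℝ) i := by
          rw [hz, map_sum]
          have hsm : (∑ j : ↥J, σ (y (j : Fin n) • P j)) = ∑ j : ↥J, y (j : Fin n) • σ (P j) :=
            Finset.sum_congr rfl fun j _ => map_smul σ _ _
          rw [hsm]
      _ = ∑ j : ↥J, y (j : Fin n) * (σ (P j) : Fin n → ℝ) i := hcoe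
      _ = ∑ j : ↥J, c i (j : Fin n) * y (j : Fin n) := by
          refine Finset.sum_congr rfl fun j _ => ?_
          have hcj : c i (j : Fin n) = (σ (P j) : Fin n → ℝ) i := by
            rw [hcdef, hPdef]
            simp only [dif_pos j.2]
          rw [hcj, mul_comm]
      _ = ∑ j ∈ J, c i j * y j := Finset.sum_coe_sort J (fun j => c i j * y j)
  have expandX : ∀ x ∈ X, ∀ i, x i = ∑ j ∈ J, c i j * x j := by
    intro x hx i
    have h1 : σ (fun j : ↥J => x (j : Fin n)) = ⟨x, hx⟩ := by
      have : eqv ⟨x, hx⟩ = fun j : ↥J => x (j : Fin n) := funext fun j => heqvapp ⟨x, hx⟩ j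
      rw [← this, eqv.symm_apply_apply]
    have h2 := expand' x i
    rw [h1] at h2
    exact h2
  refine ⟨J, hJcard, c, ?_, ?_⟩
  · intro i _
    set sgf : Fin n → ℝ := fun j => if c i j < 0 then -1 else 1 with hsgfdef
    set y : X := σ (fun j : ↥J => sgf (j : Fin n)) with hydef
    have hy1 : (y : Fin n → ℝ) i = ∑ j ∈ J, c i j * sgf j := expand' sgf i
    have hy2 : ∑ j ∈ J, c i j * sgf j = ∑ j ∈ J, |c i j| := by
      refine Finset.sum_congr rfl fun j _ => ?_
      show c i j * (if c i j < 0 then (-1 : ℝ) else 1) = |c i j|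
      by_cases hc : c i j < 0
      · rw [if_pos hc, abs_of_neg hc]; ring
      · rw [if_neg hc, abs_of_nonneg (not_lt.1 hc), mul_one]
    have hy3 : NS J (y : Fin n → ℝ) ≤ 1 := by
      refine NS_le zero_le_one fun m hm => ?_
      have h2 : (y : Fin n → ℝ) m = sgf m := hσcoord (fun j : ↥J => sgf (j : Fin n)) ⟨m, hm⟩
      rw [h2]
      show |if c i m < 0 then (-1 : ℝ) else 1| ≤ 1
      by_cases hc : c i m < 0 <;> simp [hc]
    calc ∑ j ∈ J, |c i j| = (y : Fin n → ℝ) i := by rw [hy1, hy2]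
      _ ≤ |(y : Fin n → ℝ) i| := le_abs_self _
      _ ≤ NS Finset.univ (y : Fin n → ℝ) := abs_le_NS (Finset.mem_univ i) _
      _ ≤ NS J (y : Fin n → ℝ) := hJnorm _ y.2
      _ ≤ 1 := hy3
  · ext x
    constructor
    · intro hx i hi
      exact expandX x hx i
    · intro hgraph
      set y : X := σ (fun j : ↥J => x (j : Fin n)) with hydef
      have hyx : (y : Fin n → ℝ) = x := by
        funext i
        by_cases hi : i ∈ J
        · exact hσcoord _ ⟨i, hi⟩
        · rw [hydef, expand' x i]
          exact (hgraph i hi).symm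
      rw [← hyx]
      exact y.2

end InjProof

/-- A linear subspace `X ⊆ l∞ⁿ` of dimension `k` is injective iff there is a set `J` of `k`
coordinates such that `X` is the graph of a linear map whose coefficients `c i j` satisfy
`∑_{j ∈ J} |c i j| ≤ 1` for every coordinate `i ∉ J`. -/
theorem linearSubspace_injective_iff {n : ℕ} (X : Submodule ℝ (Fin n → ℝ)) (k : ℕ)
    (hk : k = Module.finrank ℝ X) :
    IsInjectiveSubset (X : Set (Fin n → ℝ)) ↔
      ∃ J : Finset (Fin n), J.card = k ∧
        ∃ c : Fin n → Fin n → ℝ,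
          (∀ i ∉ J, ∑ j ∈ J, |c i j| ≤ 1) ∧
          (X : Set (Fin n → ℝ)) = {x | ∀ i ∉ J, x i = ∑ j ∈ J, c i j * x j} := by
  constructor
  · intro h
    obtain ⟨J, hJcard, c, hc1, hXeq⟩ := InjProof.forward X h
    exact ⟨J, hJcard.trans hk.symm, c, hc1, hXeq⟩
  · rintro ⟨J, _, c, hc1, hXeq⟩
    exact InjProof.backward X J c hc1 hXeq
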